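/- Let X ⊂ ℝⁿ be convex and let O be an ε-approximate projection oracle for X (i.e., O(y) ∈ X and ‖y − O(y)‖² ≤ min_{x'∈X} ‖y − x'‖² + ε). Then for any x ∈ X and y ∈ ℝⁿ, ‖y − x‖² ≥ (1 − √ε)·‖O(y) − x‖² − √ε. -/

import Mathlib

/-- Approximate-projection Pythagorean inequality: if `O` is an `ε`-approximate Euclidean
projection oracle onto a convex set `X ⊂ ℝⁿ`, then for any `x ∈ X` and `y ∈ ℝⁿ`,
`‖y − x‖² ≥ (1 − √ε)·‖O(y) − x‖² − √ε`. -/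
theorem approx_projection_pythagorean (n : ℕ) (Xs : Set (EuclideanSpace ℝ (Fin n)))
    (hconv : Convex ℝ Xs) (hne : Xs.Nonempty) (ε : ℝ) (hε : 0 < ε)
    (O : EuclideanSpace ℝ (Fin n) → EuclideanSpace ℝ (Fin n))
    (hmem : ∀ y, O y ∈ Xs)
    (happrox : ∀ y, ∀ x' ∈ Xs, ‖y - O y‖ ^ 2 ≤ ‖y - x'‖ ^ 2 + ε) :
    ∀ x ∈ Xs, ∀ y,
      (1 - Real.sqrt ε) * ‖O y - x‖ ^ 2 - Real.sqrt ε ≤ ‖y - x‖ ^ 2 := by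
  intro x hx y
  set α := Real.sqrt ε with hαdef
  have hα0 : 0 < α := Real.sqrt_pos.2 hε
  set z := O y with hz
  have hnorm_rev : ‖z - x‖ = ‖x - z‖ := norm_sub_rev _ _
  by_cases hα1 : α ≤ 1
  · have hp : α • x + (1 - α) • z ∈ Xs :=
      hconv hx (hmem y) hα0.le (by linarith) (by ring)
    have key := happrox y _ hp
    have hε' : ε = α ^ 2 := (Real.sq_sqrt hε.le).symm
    have e1 : ‖y - (α • x + (1 - α) • z)‖ ^ 2
        = ‖y - z‖ ^ 2 - 2 * α * inner ℝ (y - z) (x - z) + α ^ 2 * ‖x - z‖ ^ 2 := by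
      have h : y - (α • x + (1 - α) • z) = (y - z) - α • (x - z) := by module
      rw [h, @norm_sub_sq_real, real_inner_smul_right, norm_smul]
      simp [Real.norm_eq_abs, mul_pow, sq_abs]
      ring
    have e2 : ‖y - x‖ ^ 2
        = ‖y - z‖ ^ 2 - 2 * inner ℝ (y - z) (x - z) + ‖x - z‖ ^ 2 := by
      have h : y - x = (y - z) - (x - z) := by abel
      rw [h, @norm_sub_sq_real]
    rw [hnorm_rev]
    nlinarith [key, sq_nonneg ‖y - z‖, hα0, sq_nonneg ‖x - z‖]
  · nlinarith [sq_nonneg ‖z - x‖, sq_nonneg ‖y - x‖]
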